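/- Let R be a weakly Laskerian commutative ring of finite Krull dimension and I a proper ideal of R. Then every prime ideal of R minimal over I is an associated prime of I in the Zariski-Samuel sense, i.e. Min I ⊆ ZS(I). -/

import Mathlib

/-- An `R`-module `M` is *weakly Laskerian* if every quotient of `M` has only finitely many
associated prime ideals. -/
def IsWeaklyLaskerian (R : Type*) [CommRing R] (M : Type*) [AddCommGroup M]
    [Module R M] : Prop :=
  ∀ N : Submodule R M, (associatedPrimes R (M ⧸ N)).Finite

/-- If `p` is a minimal prime over `I` and `z ∈ p`, then some power of `z` multiplied by an
element outside of `p` lands in `I`. -/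
lemma exists_pow_mul_mem_of_mem_minimalPrimes {R : Type*} [CommRing R] {I p : Ideal R}
    (hp : p ∈ I.minimalPrimes) {z : R} (hz : z ∈ p) :
    ∃ (n : ℕ) (w : R), w ∉ p ∧ z ^ n * w ∈ I := by
  haveI hpp : p.IsPrime := hp.1.1
  set L := Localization.AtPrime p
  have hzr : algebraMap R L z ∈ (I.map (algebraMap R L)).radical := by
    rw [Ideal.radical_eq_sInf, Ideal.mem_sInf]
    rintro J ⟨hJle, hJprime⟩
    obtain ⟨hcp, hdisj⟩ :=
      (IsLocalization.isPrime_iff_isPrime_disjoint p.primeCompl L J).mp hJprime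
    have hcle : Ideal.comap (algebraMap R L) J ≤ p := by
      intro r hr
      by_contra hrp
      exact Set.disjoint_left.mp hdisj (show r ∈ p.primeCompl from hrp) hr
    have hIc : I ≤ Ideal.comap (algebraMap R L) J := Ideal.map_le_iff_le_comap.mp hJle
    have hple : p ≤ Ideal.comap (algebraMap R L) J := hp.2 ⟨hcp, hIc⟩ hcle
    exact hple hz
  obtain ⟨n, hn⟩ := Ideal.mem_radical_iff.mp hzr
  rw [← map_pow] at hn
  obtain ⟨⟨a, s⟩, ha⟩ := (IsLocalization.mem_map_algebraMap_iff p.primeCompl L).mp hn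
  rw [← map_mul] at ha
  obtain ⟨c, hc⟩ := (IsLocalization.eq_iff_exists p.primeCompl L).mp ha
  refine ⟨n, s * c, ?_, ?_⟩
  · exact p.primeCompl.mul_mem s.2 c.2
  · have hrw : z ^ n * (↑s * ↑c) = ↑c * (z ^ n * ↑s) := by ring
    rw [hrw, hc]
    exact I.mul_mem_left _ a.2

/-- If `R` is a weakly Laskerian commutative ring of finite Krull dimension and `I` is a
proper ideal of `R`, then every prime minimal over `I` is a Zariski–Samuel associated
prime of `I`, i.e. it equals the radical of `(I : x)` for some `x ∈ R`. -/
theorem minimalPrimes_subset_zariskiSamuel_of_weaklyLaskerian_finiteDim {R : Type*}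
    [CommRing R] (hR : IsWeaklyLaskerian R R) (hdim : ringKrullDim R < ⊤)
    (I : Ideal R) (hI : I ≠ ⊤) (p : Ideal R) (hp : p ∈ I.minimalPrimes) :
    ∃ x : R, p = (Submodule.colon I (Ideal.span {x})).radical := by
  classical
  have hpp : p.IsPrime := hp.1.1
  have hIp : I ≤ p := hp.1.2
  by_contra hcon
  push_neg at hcon
  -- Step: for every `x ∉ p`, we find a prime `q ⊇ (I : x)` with `p ⊄ q`, an element
  -- `z ∈ p \ q` and `w ∉ p`, `n` with `z ^ n * (w * x) ∈ I`.
  have step : ∀ x : R, x ∉ p → ∃ (q : Ideal R) (z w : R) (n : ℕ),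
      q.IsPrime ∧ (∀ r : R, r * x ∈ I → r ∈ q) ∧
      z ∈ p ∧ z ∉ q ∧ w ∉ p ∧ z ^ n * (w * x) ∈ I := by
    intro x hx
    have hcp : Submodule.colon I (Ideal.span {x}) ≤ p := by
      intro r hr
      have hrx : r * x ∈ I := Ideal.mem_colon_span_singleton.mp hr
      rcases hpp.mem_or_mem (hIp hrx) with h | h
      · exact h
      · exact absurd h hx
    have hexq : ∃ q : Ideal R, q.IsPrime ∧ Submodule.colon I (Ideal.span {x}) ≤ q ∧ ¬ p ≤ q := by
      by_contra hno
      push_neg at hno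
      apply hcon x
      rw [Ideal.radical_eq_sInf]
      refine le_antisymm (le_sInf ?_) (sInf_le ⟨hcp, hpp⟩)
      rintro J ⟨hJle, hJprime⟩
      exact hno J hJprime hJle
    obtain ⟨q, hq, hqle, hqnp⟩ := hexq
    obtain ⟨z, hzp, hzq⟩ := SetLike.not_le_iff_exists.mp hqnp
    obtain ⟨n, w, hwp, hzw⟩ := exists_pow_mul_mem_of_mem_minimalPrimes hp hzp
    refine ⟨q, z, w, n, hq, (fun r hr => hqle (Ideal.mem_colon_span_singleton.mpr hr)),
      hzp, hzq, hwp, ?_⟩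
    have hrw : z ^ n * (w * x) = z ^ n * w * x := by ring
    rw [hrw]
    exact I.mul_mem_right x hzw
  choose q z w n hq hqmem hzp hzq hwp hzw using step
  have h1p : (1 : R) ∉ p := fun h => hpp.ne_top ((Ideal.eq_top_iff_one p).mpr h)
  -- the recursively defined sequence `x_{k+1} = w_k * x_k`
  let X : ℕ → {r : R // r ∉ p} := fun k => Nat.rec ⟨1, h1p⟩
    (fun _ prev => ⟨w prev.1 prev.2 * prev.1,
      fun hmem => (hpp.mem_or_mem hmem).elim (hwp prev.1 prev.2) prev.2⟩) k
  have hXsucc : ∀ k : ℕ, (X (k + 1)).1 = w (X k).1 (X k).2 * (X k).1 := fun k => rfl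
  set Q : ℕ → Ideal R := fun k => q (X k).1 (X k).2 with hQ
  set Z : ℕ → R := fun k => z (X k).1 (X k).2 with hZ
  set Nn : ℕ → ℕ := fun k => n (X k).1 (X k).2 with hNn
  have hQprime : ∀ k, (Q k).IsPrime := fun k => hq _ _
  have hZp : ∀ k, Z k ∈ p := fun k => hzp _ _
  have hZq : ∀ k, Z k ∉ Q k := fun k => hzq _ _
  -- `Z k ^ Nn k * X l ∈ I` for all `l > k`
  have key2 : ∀ k l : ℕ, k < l → Z k ^ Nn k * (X l).1 ∈ I := by
    intro k l
    induction l with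
    | zero => omega
    | succ m ih =>
      intro hkm
      rcases Nat.lt_succ_iff_lt_or_eq.mp hkm with h | h
      · have hm := ih h
        rw [hXsucc m]
        have hrw : Z k ^ Nn k * (w (X m).1 (X m).2 * (X m).1) =
            w (X m).1 (X m).2 * (Z k ^ Nn k * (X m).1) := by ring
        rw [hrw]
        exact I.mul_mem_left _ hm
      · subst h
        rw [hXsucc k]
        exact hzw (X k).1 (X k).2
  have key3 : ∀ k l : ℕ, k < l → Z k ∈ Q l := by
    intro k l hkl
    have h1 : Z k ^ Nn k ∈ Q l := hqmem (X l).1 (X l).2 _ (key2 k l hkl)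
    exact (hQprime l).mem_of_pow_mem _ h1
  have hQne : ∀ k l : ℕ, k < l → Q k ≠ Q l := by
    intro k l hkl he
    exact hZq k (he ▸ key3 k l hkl)
  -- prime spectrum points and heights
  let P : ℕ → PrimeSpectrum R := fun k => ⟨Q k, hQprime k⟩
  -- extract a finite bound on the Krull dimension
  have hne : Nonempty (PrimeSpectrum R) := ⟨⟨p, hpp⟩⟩
  have hdb : ringKrullDim R ≠ ⊥ := by
    intro h
    have h0 : (0 : WithBot ℕ∞) ≤ ringKrullDim R :=
      Order.krullDim_nonneg (α := PrimeSpectrum R)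
    rw [h] at h0
    exact absurd h0 (by simp)
  obtain ⟨m, hm⟩ : ∃ m : ℕ∞, (m : WithBot ℕ∞) = ringKrullDim R :=
    WithBot.ne_bot_iff_exists.mp hdb
  have hmtop : m ≠ ⊤ := by
    intro h
    rw [h, WithBot.coe_top] at hm
    rw [← hm] at hdim
    exact lt_irrefl _ hdim
  have hheight : ∀ k : ℕ, Order.height (P k) ≤ m := by
    intro k
    have h1 : (Order.height (P k) : WithBot ℕ∞) ≤ ringKrullDim R :=
      Order.height_le_krullDim (P k)
    rw [← hm] at h1
    exact_mod_cast h1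
  have hhfin : ∀ k : ℕ, Order.height (P k) ≠ ⊤ := by
    intro k h
    exact hmtop (top_le_iff.mp (h ▸ hheight k))
  -- pigeonhole on heights
  let g : ℕ → Fin (m.toNat + 1) := fun k =>
    ⟨(Order.height (P k)).toNat, by
      have := ENat.toNat_le_toNat (hheight k) hmtop
      omega⟩
  obtain ⟨c0, hc0⟩ := Finite.exists_infinite_fiber g
  have hA : (g ⁻¹' {c0}).Infinite := Set.infinite_coe_iff.mp hc0
  -- strictly monotone enumeration of the fiber
  have hnext : ∀ a : ℕ, ∃ b, b ∈ g ⁻¹' {c0} ∧ a < b := by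
    intro a
    obtain ⟨b, hb, hab⟩ := hA.exists_gt a
    exact ⟨b, hb, hab⟩
  let e : ℕ → ℕ := fun k => Nat.rec (Classical.choose (hnext 0))
    (fun _ prev => Classical.choose (hnext prev)) k
  have heA : ∀ k : ℕ, e k ∈ g ⁻¹' {c0} := by
    intro k
    cases k with
    | zero => exact (Classical.choose_spec (hnext 0)).1
    | succ a => exact (Classical.choose_spec (hnext (e a))).1
  have hemono : StrictMono e := by
    apply strictMono_nat_of_lt_succ
    intro a
    exact (Classical.choose_spec (hnext (e a))).2
  -- all the primes `Q (e i)` have the same height, hence are pairwise incomparable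
  have hgeq : ∀ i j : ℕ, Order.height (P (e i)) = Order.height (P (e j)) := by
    intro i j
    have h1 : g (e i) = c0 := heA i
    have h2 : g (e j) = c0 := heA j
    have h3 : (Order.height (P (e i))).toNat = (Order.height (P (e j))).toNat := by
      have := h1.trans h2.symm
      simpa [g, Fin.ext_iff] using this
    calc Order.height (P (e i)) = ((Order.height (P (e i))).toNat : ℕ∞) :=
          (ENat.coe_toNat (hhfin (e i))).symm
      _ = ((Order.height (P (e j))).toNat : ℕ∞) := by rw [h3]
      _ = Order.height (P (e j)) := ENat.coe_toNat (hhfin (e j))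
  have hQene : ∀ i j : ℕ, i ≠ j → Q (e i) ≠ Q (e j) := by
    intro i j hij
    rcases hij.lt_or_gt with h | h
    · exact hQne (e i) (e j) (hemono h)
    · exact (hQne (e j) (e i) (hemono h)).symm
  have hnotle : ∀ i j : ℕ, i ≠ j → ¬ (Q (e i) ≤ Q (e j)) := by
    intro i j hij hle
    have hlt : P (e i) < P (e j) := by
      rw [← PrimeSpectrum.asIdeal_lt_asIdeal]
      exact lt_of_le_of_ne hle (hQene i j hij)
    have := Order.height_strictMono hlt ((hhfin (e i)).lt_top)
    rw [hgeq i j] at this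
    exact lt_irrefl _ this
  -- separators
  have hsep : ∀ i j : ℕ, i ≠ j → ∃ c, c ∈ Q (e i) ∧ c ∉ Q (e j) := by
    intro i j hij
    exact SetLike.not_le_iff_exists.mp (hnotle i j hij)
  choose sep hsep1 hsep2 using hsep
  -- the elements `y i`: in every `Q (e j)` for `j ≠ i`, but not in `Q (e i)`
  let y : ℕ → R := fun i => Z (e i) * ∏ j ∈ Finset.range i,
    (if h : j = i then 1 else sep j i h)
  have hy_not : ∀ i : ℕ, y i ∉ Q (e i) := by
    intro i hmem
    rcases (hQprime (e i)).mem_or_mem hmem with h | h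
    · exact hZq (e i) h
    · rw [Ideal.IsPrime.prod_mem_iff] at h
      obtain ⟨j, hjmem, hj⟩ := h
      have hji : j ≠ i := Nat.ne_of_lt (Finset.mem_range.mp hjmem)
      rw [dif_neg hji] at hj
      exact hsep2 j i hji hj
  have hy_mem : ∀ i j : ℕ, i ≠ j → y i ∈ Q (e j) := by
    intro i j hij
    rcases hij.lt_or_gt with h | h
    · -- i < j : use Z (e i) ∈ Q (e j)
      exact Ideal.mul_mem_right _ _ (key3 (e i) (e j) (hemono h))
    · -- j < i : use the separator `sep j i`
      apply Ideal.mul_mem_left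
      have hjr : j ∈ Finset.range i := Finset.mem_range.mpr h
      rw [← Finset.mul_prod_erase _ _ hjr, dif_neg (Nat.ne_of_lt h)]
      exact Ideal.mul_mem_right _ _ (hsep1 j i (Nat.ne_of_lt h))
  -- the ideal with infinitely many associated primes
  let J : Submodule R R := ⨆ i : ℕ, (Ideal.span {y i} * Q (e i) : Ideal R)
  have hJle : ∀ i : ℕ, J ≤ Q (e i) := by
    intro i
    apply iSup_le
    intro j
    rw [Ideal.mul_le]
    intro r hr s hs
    obtain ⟨t, rfl⟩ := Ideal.mem_span_singleton'.mp hr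
    by_cases h : j = i
    · subst h
      exact Ideal.mul_mem_left _ _ hs
    · have hrw : t * y j * s = t * s * y j := by ring
      rw [hrw]
      exact Ideal.mul_mem_left _ _ (hy_mem j i h)
  have hass : ∀ i : ℕ, Q (e i) ∈ associatedPrimes R (R ⧸ J) := by
    intro i
    refine ⟨hQprime (e i), Submodule.Quotient.mk (y i), ?_⟩
    suffices hs : Q (e i) = (⊥ : Submodule R (R ⧸ J)).colon {Submodule.Quotient.mk (y i)} by
      rw [← hs, (hQprime (e i)).radical]
    ext r
    rw [Submodule.mem_colon_singleton, Submodule.mem_bot, ← Submodule.Quotient.mk_smul,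
      Submodule.Quotient.mk_eq_zero, smul_eq_mul]
    constructor
    · intro hr
      have h1 : y i * r ∈ (Ideal.span {y i} * Q (e i) : Ideal R) :=
        Ideal.mul_mem_mul (Ideal.mem_span_singleton_self _) hr
      have h2 : (Ideal.span {y i} * Q (e i) : Ideal R) ≤ J := by
        exact le_iSup (fun i : ℕ => (Ideal.span {y i} * Q (e i) : Ideal R)) i
      rw [mul_comm]
      exact h2 h1
    · intro hr
      have h1 : r * y i ∈ Q (e i) := hJle i hr
      rcases (hQprime (e i)).mem_or_mem h1 with h | h
      · exact h
      · exact absurd h (hy_not i)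
  have hinj : Function.Injective (fun i : ℕ => Q (e i)) := by
    intro a b hab
    by_contra hne'
    exact hQene a b hne' hab
  have hinf : (associatedPrimes R (R ⧸ J)).Infinite :=
    Set.infinite_of_injective_forall_mem hinj hass
  exact hinf (hR J)
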